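/- For 0 < t < 1 and real x, the determinant of the 2×2 matrix φ(e^{ix}) = [[c, d],[d̃, c̃]], where c(e^{ix}) = (t cos x + sin²x)/((e^{-ix}-t)√(t²+sin²x+sin⁴x)), d(e^{ix}) = sin x/√(t²+sin²x+sin⁴x), c̃(e^{ix}) = c(e^{-ix}), d̃(e^{ix}) = d(e^{-ix}), equals 1/(t²-2t cos x+1). -/

import Mathlib

theorem det_phi (t : ℝ) (ht0 : 0 < t) (ht1 : t < 1) (x : ℝ)
    (c d : ℝ → ℂ)
    (hc : ∀ y : ℝ, c y = ((t * Real.cos y + Real.sin y ^ 2 : ℝ) : ℂ)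
        / ((Complex.exp (-y * Complex.I) - (t : ℂ))
            * (Real.sqrt (t ^ 2 + Real.sin y ^ 2 + Real.sin y ^ 4) : ℂ)))
    (hd : ∀ y : ℝ, d y = ((Real.sin y : ℝ) : ℂ)
        / ((Real.sqrt (t ^ 2 + Real.sin y ^ 2 + Real.sin y ^ 4) : ℝ) : ℂ)) :
    (Matrix.det !![c x, d x; d (-x), c (-x)])
      = 1 / ((t : ℂ) ^ 2 - 2 * (t : ℂ) * (Real.cos x : ℂ) + 1) := by
  have hSpos : (0:ℝ) < t ^ 2 + Real.sin x ^ 2 + Real.sin x ^ 4 := by positivity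
  have hs2 : Real.sqrt (t ^ 2 + Real.sin x ^ 2 + Real.sin x ^ 4) ^ 2
      = t ^ 2 + Real.sin x ^ 2 + Real.sin x ^ 4 := Real.sq_sqrt hSpos.le
  have hs0 : (Real.sqrt (t ^ 2 + Real.sin x ^ 2 + Real.sin x ^ 4) : ℂ) ≠ 0 := by
    exact_mod_cast (Real.sqrt_pos.mpr hSpos).ne'
  have habs : ∀ y : ℝ, Complex.exp (-(y:ℂ) * Complex.I) - (t:ℂ) ≠ 0 := by
    intro y h
    have h2 : Complex.exp (-(y:ℂ) * Complex.I) = (t:ℂ) := sub_eq_zero.mp h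
    have h3 := congrArg (‖·‖) h2
    rw [Complex.norm_exp] at h3
    simp [Complex.norm_real, abs_of_pos ht0] at h3
    linarith
  have hE : Complex.exp (-(x:ℂ) * Complex.I)
      = (Real.cos x : ℂ) - (Real.sin x : ℂ) * Complex.I := by
    rw [show (-(x:ℂ)) * Complex.I = ((-x:ℂ)) * Complex.I by ring, Complex.exp_mul_I,
      Complex.cos_neg, Complex.sin_neg, ← Complex.ofReal_cos, ← Complex.ofReal_sin]
    ring
  have hF : Complex.exp (-((-x:ℝ):ℂ) * Complex.I)
      = (Real.cos x : ℂ) + (Real.sin x : ℂ) * Complex.I := by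
    push_cast
    rw [show -(-(x:ℂ)) * Complex.I = ((x:ℂ)) * Complex.I by ring, Complex.exp_mul_I,
      ← Complex.ofReal_cos, ← Complex.ofReal_sin]
  have hdenR : (0:ℝ) < t ^ 2 - 2 * t * Real.cos x + 1 := by
    nlinarith [Real.cos_le_one x, Real.neg_one_le_cos x]
  have hden : (t : ℂ) ^ 2 - 2 * (t : ℂ) * (Real.cos x : ℂ) + 1 ≠ 0 := by
    exact_mod_cast Complex.ofReal_ne_zero.mpr hdenR.ne'
  have harg : t ^ 2 + Real.sin (-x) ^ 2 + Real.sin (-x) ^ 4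
      = t ^ 2 + Real.sin x ^ 2 + Real.sin x ^ 4 := by rw [Real.sin_neg]; ring
  rw [Matrix.det_fin_two_of, hc x, hc (-x), hd x, hd (-x), harg,
    Real.sin_neg, Real.cos_neg, hF, hE]
  have hE0 := habs x
  rw [hE] at hE0
  have hF0 : (Real.cos x : ℂ) + (Real.sin x : ℂ) * Complex.I - (t:ℂ) ≠ 0 := by
    have := habs (-x); rw [hF] at this; exact_mod_cast this
  have hpy : (Real.cos x : ℂ) ^ 2 + (Real.sin x : ℂ) ^ 2 = 1 := by
    exact_mod_cast congrArg (Complex.ofReal) (Real.cos_sq_add_sin_sq x)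
  have hs2' : ((Real.sqrt (t ^ 2 + Real.sin x ^ 2 + Real.sin x ^ 4) : ℂ)) ^ 2
      = (t:ℂ) ^ 2 + (Real.sin x : ℂ) ^ 2 + (Real.sin x : ℂ) ^ 4 := by
    exact_mod_cast congrArg (Complex.ofReal) hs2
  simp only [Complex.ofReal_add, Complex.ofReal_mul, Complex.ofReal_pow, Complex.ofReal_neg]
  set A := (Real.cos x : ℂ) with hA
  set B := (Real.sin x : ℂ) with hB
  set S := (Real.sqrt (t ^ 2 + Real.sin x ^ 2 + Real.sin x ^ 4) : ℂ) with hS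
  clear_value A B S
  clear hc hd hE hF hs2 hdenR harg habs hSpos hA hB hS
  field_simp
  rw [eq_div_iff (by contrapose! hden; linear_combination hden)]
  linear_combination ((((t:ℂ)*((t:ℂ) - A*2) + 1)*((t:ℂ)^2+B^2)) - ((t:ℂ)^2+B^2+B^4)) * hpy
    - ((A-(t:ℂ))^2+B^2) * hs2'
    + (S^2*B^2 - B^4*((t:ℂ)*((t:ℂ) - A*2) + 1)) * Complex.I_sq
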